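/- In the Coxeter group W of type E₇, let u be an element of the parabolic subgroup P generated by s₂, s₃, s₄, s₅ whose length ℓ(u) is maximal among the lengths of elements of P. Then w₀ · (s₂s₅s₇) is conjugate in W to u. -/

import Mathlib

set_option maxRecDepth 100000
set_option maxHeartbeats 4000000

namespace Stmt14
open CoxeterMatrix CoxeterSystem

abbrev cs : CoxeterSystem E₇ E₇.Group := E₇.toCoxeterSystem

local prefix:100 "σ" => cs.simple
local prefix:100 "ℓ" => cs.length

/-- generator matrices of the (integral, simply-laced) geometric representation -/
def gm (i : Fin 7) : Matrix (Fin 7) (Fin 7) ℤ :=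
  Matrix.of fun r k => (if r = k then 1 else 0) +
    (if r = i then (if k = i then -2 else if E₇ k i = 3 then 1 else 0) else 0)

lemma gm_mul_self : ∀ i, gm i * gm i = 1 := by decide

def gmu (i : Fin 7) : (Matrix (Fin 7) (Fin 7) ℤ)ˣ :=
  ⟨gm i, gm i, gm_mul_self i, gm_mul_self i⟩

lemma gm_pow : ∀ i j : Fin 7, (gm i * gm j) ^ (E₇ i j) = 1 := by decide

lemma liftable : E₇.IsLiftable gmu := by
  intro i j
  apply Units.ext
  rw [Units.val_pow_eq_pow_val, Units.val_mul]
  exact gm_pow i j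

noncomputable def φ : E₇.Group →* (Matrix (Fin 7) (Fin 7) ℤ)ˣ := cs.lift ⟨gmu, liftable⟩

/-- the matrix of w -/
noncomputable def ρ (w : E₇.Group) : Matrix (Fin 7) (Fin 7) ℤ := (φ w).val

lemma ρ_one : ρ 1 = 1 := by simp [ρ]

lemma ρ_mul (a b : E₇.Group) : ρ (a * b) = ρ a * ρ b := by simp [ρ]

lemma ρ_simple (i : Fin 7) : ρ (σ i) = gm i := by
  show (φ (cs.simple i)).val = gm i
  rw [φ, cs.lift_apply_simple]
  rfl

lemma ρ_eq_imp (a b : E₇.Group) (h : ρ a = ρ b) : φ a = φ b := Units.ext h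

lemma ρ_wordProd (ω : List (Fin 7)) : ρ (cs.wordProd ω) = (ω.map gm).prod := by
  induction ω with
  | nil => simpa using ρ_one
  | cons i ω ih => rw [cs.wordProd_cons, ρ_mul, ρ_simple, List.map_cons, List.prod_cons, ih]

/-- simple root as coordinate vector -/
def α (i : Fin 7) : Fin 7 → ℤ := Pi.single i 1

def PosV (x : Fin 7 → ℤ) : Prop := (∀ k, 0 ≤ x k) ∧ x ≠ 0

lemma pos_α (i : Fin 7) : PosV (α i) := by
  constructor
  · intro k
    rcases eq_or_ne k i with rfl | h
    · simp [α]
    · simp [α, Pi.single_eq_of_ne h]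
  · intro h
    have := congrFun h i
    simp [α] at this

lemma pos_add {x y : Fin 7 → ℤ} (hx : PosV x) (hy : PosV y) : PosV (x + y) := by
  refine ⟨fun k => add_nonneg (hx.1 k) (hy.1 k), fun h => ?_⟩
  apply hx.2
  funext k
  have h1 := congrFun h k
  have := hx.1 k; have := hy.1 k
  simp only [Pi.add_apply, Pi.zero_apply] at h1 ⊢
  omega

lemma pos_not_neg {x : Fin 7 → ℤ} (hx : PosV x) (hx' : PosV (-x)) : False := by
  apply hx.2
  funext k
  have h1 := hx.1 k
  have h2 := hx'.1 k
  simp only [Pi.neg_apply, Pi.zero_apply] at h2 ⊢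
  omega

-- decidable action facts
lemma gmv_self : ∀ i, (gm i).mulVec (α i) = -(α i) := by decide
lemma gmv_two : ∀ i j : Fin 7, E₇ i j = 2 → (gm j).mulVec (α i) = α i := by
  intro i j; fin_cases i <;> fin_cases j <;> decide
lemma gmv_three : ∀ i j : Fin 7, E₇ i j = 3 → (gm j).mulVec (α i) = α i + α j := by
  intro i j; fin_cases i <;> fin_cases j <;> decide
lemma gmv_ij : ∀ i j : Fin 7, E₇ i j = 3 → (gm i * gm j).mulVec (α i) = α j := by
  intro i j; fin_cases i <;> fin_cases j <;> decide
lemma gm_mul_ne_one : ∀ i j : Fin 7, i ≠ j → gm i * gm j ≠ 1 := by decide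
lemma gm_triple_ne : ∀ i j k : Fin 7, E₇ i j = 3 → gm i * gm j * gm i ≠ gm k := by
  intro i j; fin_cases i <;> fin_cases j <;> decide
lemma E₇_two_or_three : ∀ i j : Fin 7, i ≠ j → E₇ i j = 2 ∨ E₇ i j = 3 := by
  intro i j; fin_cases i <;> fin_cases j <;> decide


lemma comm2 (i j : Fin 7) (h : E₇ i j = 2) : σ i * σ j = σ j * σ i := by
  have hp := cs.simple_mul_simple_pow i j
  rw [h] at hp
  have h2 : (σ i * σ j) * (σ i * σ j) = 1 := by rw [← sq]; exact hp
  calc σ i * σ j = (σ i * σ j)⁻¹ := (mul_eq_one_iff_eq_inv.mp h2)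
    _ = (σ j)⁻¹ * (σ i)⁻¹ := mul_inv_rev _ _
    _ = σ j * σ i := by rw [cs.inv_simple, cs.inv_simple]

lemma braid3 (i j : Fin 7) (h : E₇ i j = 3) : σ i * σ j * σ i = σ j * σ i * σ j := by
  have hp := cs.simple_mul_simple_pow i j
  rw [h] at hp
  have h3 : (σ i * σ j * σ i) * (σ j * σ i * σ j) = 1 := by
    have : (σ i * σ j) * (σ i * σ j) * (σ i * σ j) = 1 := by
      have h' := hp
      rw [pow_succ, pow_succ, pow_one] at h'
      exact h'
    calc (σ i * σ j * σ i) * (σ j * σ i * σ j)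
        = (σ i * σ j) * (σ i * σ j) * (σ i * σ j) := by simp only [mul_assoc]
      _ = 1 := this
  calc σ i * σ j * σ i = (σ j * σ i * σ j)⁻¹ := mul_eq_one_iff_eq_inv.mp h3
    _ = σ j * σ i * σ j := by
        simp only [mul_inv_rev, cs.inv_simple, mul_assoc]

lemma dihedral2 (i j : Fin 7) (h : E₇ i j = 2) {v : E₇.Group}
    (hv : v ∈ Subgroup.closure {σ i, σ j}) :
    v = 1 ∨ v = σ i ∨ v = σ j ∨ v = σ i * σ j := by
  induction hv using Subgroup.closure_induction_right with
  | one => left; rfl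
  | mul_right x hx y hy ih =>
    have hy' : y = σ i ∨ y = σ j := by simpa [Set.mem_insert_iff] using hy
    rcases hy' with rfl | rfl
    · rcases ih with rfl | rfl | rfl | rfl
      · right; left; rw [one_mul]
      · left; exact cs.simple_mul_simple_self i
      · right; right; right; rw [comm2 i j h]
      · right; right; left
        rw [comm2 i j h, mul_assoc, cs.simple_mul_simple_self, mul_one]
    · rcases ih with rfl | rfl | rfl | rfl
      · right; right; left; rw [one_mul]
      · right; right; right; rfl
      · left; exact cs.simple_mul_simple_self j
      · right; left; rw [mul_assoc, cs.simple_mul_simple_self, mul_one]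
  | mul_inv_cancel x hx y hy ih =>
    have hy' : y = σ i ∨ y = σ j := by simpa [Set.mem_insert_iff] using hy
    rcases hy' with rfl | rfl
    · rw [cs.inv_simple]
      rcases ih with rfl | rfl | rfl | rfl
      · right; left; rw [one_mul]
      · left; exact cs.simple_mul_simple_self i
      · right; right; right; rw [comm2 i j h]
      · right; right; left
        rw [comm2 i j h, mul_assoc, cs.simple_mul_simple_self, mul_one]
    · rw [cs.inv_simple]
      rcases ih with rfl | rfl | rfl | rfl
      · right; right; left; rw [one_mul]
      · right; right; right; rfl
      · left; exact cs.simple_mul_simple_self j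
      · right; left; rw [mul_assoc, cs.simple_mul_simple_self, mul_one]

lemma dihedral3_step (i j : Fin 7) (h : E₇ i j = 3) (x y : E₇.Group)
    (hy : y = σ i ∨ y = σ j)
    (ih : x = 1 ∨ x = σ i ∨ x = σ j ∨ x = σ i * σ j ∨ x = σ j * σ i ∨ x = σ i * σ j * σ i) :
    x * y = 1 ∨ x * y = σ i ∨ x * y = σ j ∨ x * y = σ i * σ j ∨ x * y = σ j * σ i ∨
      x * y = σ i * σ j * σ i := by
  rcases hy with rfl | rfl
  · rcases ih with rfl | rfl | rfl | rfl | rfl | rfl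
    · right; left; rw [one_mul]
    · left; exact cs.simple_mul_simple_self i
    · right; right; right; right; left; rfl
    · right; right; right; right; right; rfl
    · right; right; left; rw [mul_assoc, cs.simple_mul_simple_self, mul_one]
    · right; right; right; left; rw [mul_assoc, cs.simple_mul_simple_self, mul_one]
  · rcases ih with rfl | rfl | rfl | rfl | rfl | rfl
    · right; right; left; rw [one_mul]
    · right; right; right; left; rfl
    · left; exact cs.simple_mul_simple_self j
    · right; left; rw [mul_assoc, cs.simple_mul_simple_self, mul_one]
    · right; right; right; right; right
      exact (braid3 i j h).symm
    · right; right; right; right; left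
      rw [braid3 i j h, mul_assoc, cs.simple_mul_simple_self, mul_one]

lemma dihedral3 (i j : Fin 7) (h : E₇ i j = 3) {v : E₇.Group}
    (hv : v ∈ Subgroup.closure {σ i, σ j}) :
    v = 1 ∨ v = σ i ∨ v = σ j ∨ v = σ i * σ j ∨ v = σ j * σ i ∨ v = σ i * σ j * σ i := by
  induction hv using Subgroup.closure_induction_right with
  | one => left; rfl
  | mul_right x hx y hy ih =>
    exact dihedral3_step i j h x y (by simpa [Set.mem_insert_iff] using hy) ih
  | mul_inv_cancel x hx y hy ih =>
    have hy' : y = σ i ∨ y = σ j := by simpa [Set.mem_insert_iff] using hy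
    have : y⁻¹ = y := by rcases hy' with rfl | rfl <;> exact cs.inv_simple _
    rw [this]
    exact dihedral3_step i j h x y hy' ih

lemma min_decomp (w : E₇.Group) (i j : Fin 7) (hj : cs.IsRightDescent w j) :
    ∃ u v, w = u * v ∧ v ∈ Subgroup.closure {σ i, σ j} ∧ ℓ w = ℓ u + ℓ v ∧
      ¬ cs.IsRightDescent u i ∧ ¬ cs.IsRightDescent u j ∧ v ≠ 1 := by
  classical
  have hex : ∃ n : ℕ, ∃ u v : E₇.Group, w = u * v ∧ v ∈ Subgroup.closure {σ i, σ j} ∧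
      ℓ w = ℓ u + ℓ v ∧ ℓ u = n := by
    refine ⟨ℓ (w * σ j), w * σ j, σ j, ?_, Subgroup.subset_closure (by simp), ?_, rfl⟩
    · rw [mul_assoc, cs.simple_mul_simple_self, mul_one]
    · have hlt : ℓ (w * σ j) < ℓ w := hj
      have := cs.length_mul_simple w j
      rw [cs.length_simple]
      omega
  obtain ⟨u, v, hw, hv, hlen, hn⟩ := Nat.find_spec hex
  have nodesc : ∀ k : Fin 7, σ k ∈ ({σ i, σ j} : Set E₇.Group) →
      ¬ cs.IsRightDescent u k := by
    intro k hk hdk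
    have hul : ℓ (u * σ k) < ℓ u := hdk
    have hdich := cs.length_mul_simple u k
    have hw' : w = (u * σ k) * (σ k * v) := by
      rw [hw, mul_assoc, cs.simple_mul_simple_cancel_left]
    have l1 : ℓ w ≤ ℓ (u * σ k) + ℓ (σ k * v) := by
      rw [hw']; exact cs.length_mul_le _ _
    have l2 : ℓ (σ k * v) ≤ 1 + ℓ v := by
      have := cs.length_mul_le (σ k) v
      rwa [cs.length_simple] at this
    have l3 : ℓ w = ℓ (u * σ k) + ℓ (σ k * v) := by omega
    exact Nat.find_min hex (m := ℓ (u * σ k)) (by omega)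
      ⟨u * σ k, σ k * v, hw', mul_mem (Subgroup.subset_closure hk) hv, l3, rfl⟩
  have hui := nodesc i (by simp)
  have huj := nodesc j (by simp)
  have hv1 : v ≠ 1 := by
    rintro rfl
    rw [mul_one] at hw
    exact huj (hw ▸ hj)
  exact ⟨u, v, hw, hv, hlen, hui, huj, hv1⟩

theorem key : ∀ n (w : E₇.Group), ℓ w = n → ∀ i, ¬ cs.IsRightDescent w i →
    PosV ((ρ w).mulVec (α i)) := by
  intro n
  induction n using Nat.strong_induction_on with
  | _ n IH =>
  intro w hlw i hdi
  by_cases hw1 : w = 1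
  · subst hw1; rw [ρ_one, Matrix.one_mulVec]; exact pos_α i
  obtain ⟨j, hj⟩ := cs.exists_rightDescent_of_ne_one hw1
  have hij : i ≠ j := by rintro rfl; exact hdi hj
  obtain ⟨u, v, hw, hvmem, hlen, hui, huj, hv1⟩ := min_decomp w i j hj
  have hvpos : 1 ≤ ℓ v := by
    have := cs.length_eq_zero_iff (w := v)
    rcases Nat.eq_zero_or_pos (ℓ v) with h | h
    · exact absurd (this.mp h) hv1
    · exact h
  have hulen : ℓ u < n := by omega
  have Pu : PosV ((ρ u).mulVec (α i)) := IH (ℓ u) hulen u rfl i hui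
  have Pv : PosV ((ρ u).mulVec (α j)) := IH (ℓ u) hulen u rfl j huj
  have hrw : (ρ w).mulVec (α i) = (ρ u).mulVec ((ρ v).mulVec (α i)) := by
    rw [hw, ρ_mul, Matrix.mulVec_mulVec]
  have hdw : ℓ (w * σ i) = ℓ w + 1 := (cs.not_isRightDescent_iff).mp hdi
  -- length facts for two-letter products
  have len2 : ∀ a b : Fin 7, σ a * σ b ≠ 1 → ℓ (σ a * σ b) = 2 := by
    intro a b hab
    have hpar := cs.length_mul_mod_two (σ a) (σ b)
    rw [cs.length_simple, cs.length_simple] at hpar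
    have hle : ℓ (σ a * σ b) ≤ 2 := by
      have := cs.length_mul_le (σ a) (σ b)
      rw [cs.length_simple, cs.length_simple] at this
      omega
    have hne : ℓ (σ a * σ b) ≠ 0 := by
      intro h0
      exact hab (cs.length_eq_zero_iff.mp h0)
    omega
  have ne2 : ∀ a b : Fin 7, a ≠ b → σ a * σ b ≠ 1 := by
    intro a b hab h1
    apply gm_mul_ne_one a b hab
    have := congrArg ρ h1
    rwa [ρ_mul, ρ_simple, ρ_simple, ρ_one] at this
  rcases E₇_two_or_three i j hij with hm | hm
  · -- m = 2
    rcases dihedral2 i j hm hvmem with rfl | rfl | rfl | rfl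
    · exact absurd rfl hv1
    · -- v = σ i : bad
      exfalso
      have h1 : w * σ i = u := by rw [hw, mul_assoc, cs.simple_mul_simple_self, mul_one]
      have h2 : ℓ (w * σ i) = ℓ u := by rw [h1]
      rw [cs.length_simple] at hlen
      omega
    · -- v = σ j : good, α i fixed
      rw [hrw, ρ_simple, gmv_two i j hm]
      exact Pu
    · -- v = σ i * σ j : bad
      exfalso
      have hvl : ℓ (σ i * σ j) = 2 := len2 i j (ne2 i j hij)
      have h1 : w * σ i = u * σ j := by
        rw [hw, mul_assoc, mul_assoc, ← mul_assoc (σ i), comm2 i j hm,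
          mul_assoc, cs.simple_mul_simple_self, mul_one]
      have h2 : ℓ (w * σ i) ≤ ℓ u + 1 := by
        rw [h1]
        have := cs.length_mul_le u (σ j)
        rwa [cs.length_simple] at this
      omega
  · -- m = 3
    rcases dihedral3 i j hm hvmem with rfl | rfl | rfl | rfl | rfl | rfl
    · exact absurd rfl hv1
    · -- v = σ i : bad
      exfalso
      have h1 : w * σ i = u := by rw [hw, mul_assoc, cs.simple_mul_simple_self, mul_one]
      have h2 : ℓ (w * σ i) = ℓ u := by rw [h1]
      rw [cs.length_simple] at hlen
      omega
    · -- v = σ j : good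
      rw [hrw, ρ_simple, gmv_three i j hm, Matrix.mulVec_add]
      exact pos_add Pu Pv
    · -- v = σ i * σ j : good
      rw [hrw, ρ_mul, ρ_simple, ρ_simple, gmv_ij i j hm]
      exact Pv
    · -- v = σ j * σ i : bad
      exfalso
      have hvl : ℓ (σ j * σ i) = 2 := len2 j i (ne2 j i hij.symm)
      have h1 : w * σ i = u * σ j := by
        rw [hw, mul_assoc, mul_assoc, cs.simple_mul_simple_self, mul_one]
      have h2 : ℓ (w * σ i) ≤ ℓ u + 1 := by
        rw [h1]
        have := cs.length_mul_le u (σ j)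
        rwa [cs.length_simple] at this
      omega
    · -- v = σ i * σ j * σ i : bad
      exfalso
      have hvl : ℓ (σ i * σ j * σ i) = 3 := by
        have hpar := cs.length_mul_mod_two (σ i * σ j) (σ i)
        rw [cs.length_simple, len2 i j (ne2 i j hij)] at hpar
        have hle : ℓ (σ i * σ j * σ i) ≤ 3 := by
          have h4 := cs.length_mul_le (σ i * σ j) (σ i)
          rw [cs.length_simple, len2 i j (ne2 i j hij)] at h4
          omega
        have hne1 : ℓ (σ i * σ j * σ i) ≠ 1 := by
          intro h1
          obtain ⟨k, hk⟩ := cs.length_eq_one_iff.mp h1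
          apply gm_triple_ne i j k hm
          have := congrArg ρ hk
          simp only [ρ_mul, ρ_simple] at this
          exact this
        omega
      have h1 : w * σ i = u * (σ i * σ j) := by
        rw [hw, mul_assoc, mul_assoc, mul_assoc, cs.simple_mul_simple_self, mul_one]
      have h2 : ℓ (w * σ i) ≤ ℓ u + 2 := by
        rw [h1]
        have := cs.length_mul_le u (σ i * σ j)
        rwa [len2 i j (ne2 i j hij)] at this
      omega

lemma descent_neg {w : E₇.Group} {i : Fin 7} (h : cs.IsRightDescent w i) :
    PosV (-((ρ w).mulVec (α i))) := by
  have hnd : ¬ cs.IsRightDescent (w * σ i) i :=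
    (cs.isRightDescent_iff_not_isRightDescent_mul).mp h
  have hp := key (ℓ (w * σ i)) (w * σ i) rfl i hnd
  rwa [ρ_mul, ρ_simple, ← Matrix.mulVec_mulVec, gmv_self, Matrix.mulVec_neg] at hp

lemma eq_of_ρ_eq {a b : E₇.Group} (h : ρ a = ρ b) : a = b := by
  have hφ : φ (b⁻¹ * a) = 1 := by
    rw [map_mul, map_inv, ρ_eq_imp a b h, inv_mul_cancel]
  have hρ : ρ (b⁻¹ * a) = 1 := by rw [ρ, hφ]; rfl
  by_contra hne
  have hv1 : b⁻¹ * a ≠ 1 := fun hh => hne (inv_mul_eq_one.mp hh).symm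
  obtain ⟨j, hj⟩ := cs.exists_rightDescent_of_ne_one hv1
  have h3 := descent_neg hj
  rw [hρ, Matrix.one_mulVec] at h3
  exact pos_not_neg (pos_α j) h3

/-- word for the longest element (any word whose matrix is `-1` will do) -/
def zw : List (Fin 7) := (List.replicate 9 ([0,1,2,3,4,5,6] : List (Fin 7))).flatten
/-- word for the longest element of the parabolic of type D₄ -/
def pw : List (Fin 7) := [1,2,3,4,1,2,3,4,1,2,3,4]
/-- conjugating word -/
def cw : List (Fin 7) := [5,6,0,2,3,4,5,1,3,4,2,3,0,2,1,3,4,5,2,3,0,2,1,3]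

noncomputable def z : E₇.Group := cs.wordProd zw
noncomputable def u₀ : E₇.Group := cs.wordProd pw
noncomputable def gg : E₇.Group := cs.wordProd cw

lemma ρ_z : ρ z = -1 := by
  rw [z, ρ_wordProd]; decide

lemma w₀_eq (w₀ : E₇.Group) (hw₀ : ∀ w : E₇.Group, ℓ w ≤ ℓ w₀) : w₀ = z := by
  have hdes : ∀ i, cs.IsRightDescent w₀ i := fun i =>
    lt_of_le_of_ne (hw₀ (w₀ * σ i)) (cs.length_mul_simple_ne w₀ i)
  have hkey : ∀ i, PosV (-((ρ w₀).mulVec (α i))) := fun i => descent_neg (hdes i)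
  by_contra hne
  have hv1 : z⁻¹ * w₀ ≠ 1 := fun h => hne (inv_mul_eq_one.mp h).symm
  obtain ⟨j, hj⟩ := cs.exists_rightDescent_of_ne_one hv1
  have h3 := descent_neg hj
  have hρ : ρ (z⁻¹ * w₀) = -(ρ w₀) := by
    have h4 : ρ z * ρ (z⁻¹ * w₀) = ρ w₀ := by
      rw [← ρ_mul, mul_inv_cancel_left]
    rw [ρ_z, neg_one_mul] at h4
    exact neg_eq_iff_eq_neg.mp h4
  rw [hρ, Matrix.neg_mulVec, neg_neg] at h3
  exact pos_not_neg h3 (hkey j)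

-- the parabolic subgroup generating set
lemma gm_row : ∀ (j r : Fin 7), (j = 1 ∨ j = 2 ∨ j = 3 ∨ j = 4) → (r = 0 ∨ r = 5 ∨ r = 6) →
    ∀ k, gm j r k = if r = k then 1 else 0 := by
  intro j r; fin_cases j <;> fin_cases r <;> decide

lemma row_id {A : Matrix (Fin 7) (Fin 7) ℤ} {r : Fin 7}
    (h : ∀ k, A r k = if r = k then 1 else 0) (x : Fin 7 → ℤ) : A.mulVec x r = x r := by
  have h2 : ∀ k, A r k * x k = if r = k then x k else 0 := by
    intro k; rw [h k]; split <;> simp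
  calc A.mulVec x r = ∑ k, A r k * x k := rfl
    _ = ∑ k, if r = k then x k else 0 := Finset.sum_congr rfl (fun k _ => h2 k)
    _ = x r := by rw [Finset.sum_ite_eq]; simp

lemma coordfix {v : E₇.Group}
    (hv : v ∈ Subgroup.closure ({σ 1, σ 2, σ 3, σ 4} : Set E₇.Group)) :
    ∀ (x : Fin 7 → ℤ) (r : Fin 7), r = 0 ∨ r = 5 ∨ r = 6 → (ρ v).mulVec x r = x r := by
  induction hv using Subgroup.closure_induction with
  | mem y hy =>
    intro x r hr
    have hy' : y = σ 1 ∨ y = σ 2 ∨ y = σ 3 ∨ y = σ 4 := by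
      simpa [Set.mem_insert_iff] using hy
    have : ∃ j : Fin 7, (j = 1 ∨ j = 2 ∨ j = 3 ∨ j = 4) ∧ y = σ j := by
      rcases hy' with rfl | rfl | rfl | rfl
      · exact ⟨1, by simp⟩
      · exact ⟨2, by simp⟩
      · exact ⟨3, by simp⟩
      · exact ⟨4, by simp⟩
    obtain ⟨j, hj, rfl⟩ := this
    rw [ρ_simple]
    exact row_id (gm_row j r hj hr) x
  | one => intro x r hr; rw [ρ_one, Matrix.one_mulVec]
  | mul a b ha hb iha ihb =>
    intro x r hr
    rw [ρ_mul, ← Matrix.mulVec_mulVec, iha _ r hr, ihb x r hr]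
  | inv a ha iha =>
    intro x r hr
    have hfix : (ρ a).mulVec ((ρ a⁻¹).mulVec x) = x := by
      rw [Matrix.mulVec_mulVec, ← ρ_mul, mul_inv_cancel, ρ_one, Matrix.one_mulVec]
    calc (ρ a⁻¹).mulVec x r = (ρ a).mulVec ((ρ a⁻¹).mulVec x) r := (iha _ r hr).symm
      _ = x r := by rw [hfix]

def zpr : Matrix (Fin 7) (Fin 7) ℤ := (pw.reverse.map gm).prod

lemma zpr_col : ∀ (r k : Fin 7), (k = 1 ∨ k = 2 ∨ k = 3 ∨ k = 4) →
    zpr r k = if r = k then -1 else 0 := by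
  intro r k; fin_cases r <;> fin_cases k <;> decide

lemma zpr_neg (x : Fin 7 → ℤ) (h0 : x 0 = 0) (h5 : x 5 = 0) (h6 : x 6 = 0) :
    zpr.mulVec x = -x := by
  funext r
  have h : zpr.mulVec x r = ∑ k, zpr r k * x k := rfl
  rw [h, Fin.sum_univ_seven, h0, h5, h6,
    zpr_col r 1 (by norm_num), zpr_col r 2 (by norm_num),
    zpr_col r 3 (by norm_num), zpr_col r 4 (by norm_num)]
  fin_cases r <;> simp [h0, h5, h6]

lemma ρ_u₀_inv : ρ (u₀⁻¹) = zpr := by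
  rw [u₀, ← cs.wordProd_reverse, ρ_wordProd]; rfl

lemma u₀_mem : u₀ ∈ Subgroup.closure ({σ 1, σ 2, σ 3, σ 4} : Set E₇.Group) := by
  rw [u₀]
  show cs.wordProd [1,2,3,4,1,2,3,4,1,2,3,4] ∈ _
  simp only [CoxeterSystem.wordProd_cons, CoxeterSystem.wordProd_nil, mul_one]
  repeat' apply mul_mem
  all_goals apply Subgroup.subset_closure
  all_goals simp

lemma u_eq (u : E₇.Group)
    (hu : u ∈ Subgroup.closure ({σ 1, σ 2, σ 3, σ 4} : Set E₇.Group))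
    (humax : ∀ v ∈ Subgroup.closure ({σ 1, σ 2, σ 3, σ 4} : Set E₇.Group), ℓ v ≤ ℓ u) :
    u = u₀ := by
  by_contra hne
  have hv1 : u₀⁻¹ * u ≠ 1 := fun h => hne (inv_mul_eq_one.mp h).symm
  obtain ⟨k, hk⟩ := cs.exists_rightDescent_of_ne_one hv1
  have hvmem : u₀⁻¹ * u ∈ Subgroup.closure ({σ 1, σ 2, σ 3, σ 4} : Set E₇.Group) :=
    mul_mem (inv_mem u₀_mem) hu
  have hneg := descent_neg hk
  have hcases : (k = 1 ∨ k = 2 ∨ k = 3 ∨ k = 4) ∨ (k = 0 ∨ k = 5 ∨ k = 6) :=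
    (by decide : ∀ k : Fin 7, (k = 1 ∨ k = 2 ∨ k = 3 ∨ k = 4) ∨ (k = 0 ∨ k = 5 ∨ k = 6)) k
  rcases hcases with hkI | hkO
  · have hdes : cs.IsRightDescent u k := by
      have hmem : σ k ∈ ({σ 1, σ 2, σ 3, σ 4} : Set E₇.Group) := by
        rcases hkI with rfl | rfl | rfl | rfl <;> simp
      have h1 := humax (u * σ k) (mul_mem hu (Subgroup.subset_closure hmem))
      exact lt_of_le_of_ne h1 (cs.length_mul_simple_ne u k)
    have hx := descent_neg hdes
    have hx0 : ∀ r : Fin 7, r = 0 ∨ r = 5 ∨ r = 6 → (ρ u).mulVec (α k) r = 0 := by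
      intro r hr
      have hrk : r ≠ k := by
        rcases hr with rfl | rfl | rfl <;> rcases hkI with rfl | rfl | rfl | rfl <;> decide
      rw [coordfix hu (α k) r hr]
      exact Pi.single_eq_of_ne hrk 1
    have hsplit : (ρ (u₀⁻¹ * u)).mulVec (α k) = -((ρ u).mulVec (α k)) := by
      rw [ρ_mul, ← Matrix.mulVec_mulVec, ρ_u₀_inv,
        zpr_neg _ (hx0 0 (by norm_num)) (hx0 5 (by norm_num)) (hx0 6 (by norm_num))]
    rw [hsplit, neg_neg] at hneg
    exact pos_not_neg hneg hx
  · have h1 : (ρ (u₀⁻¹ * u)).mulVec (α k) k = α k k := coordfix hvmem (α k) k hkO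
    have h2 := hneg.1 k
    rw [Pi.neg_apply, h1] at h2
    simp [α] at h2

lemma final_matrix :
    (cw.map gm).prod * ((zw.map gm).prod * (gm 1 * gm 4 * gm 6)) * (cw.reverse.map gm).prod
      = (pw.map gm).prod := by decide

lemma conj_result : IsConj (z * (σ 1 * σ 4 * σ 6)) u₀ := by
  rw [isConj_iff]
  refine ⟨gg, ?_⟩
  apply eq_of_ρ_eq
  have hggi : ρ (gg⁻¹) = (cw.reverse.map gm).prod := by
    rw [gg, ← cs.wordProd_reverse, ρ_wordProd]
  have hggr : ρ gg = (cw.map gm).prod := by rw [gg, ρ_wordProd]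
  have hzr : ρ z = (zw.map gm).prod := by rw [z, ρ_wordProd]
  have hur : ρ u₀ = (pw.map gm).prod := by rw [u₀, ρ_wordProd]
  simp only [ρ_mul, ρ_simple, hggi, hggr, hzr, hur]
  exact final_matrix

end Stmt14
/-- In the Coxeter group `W` of type `E₇` (with simple reflections `s₁, …, s₇` in Bourbaki
numbering, here 0-indexed as `s 0, …, s 6`), let `u` be an element of the parabolic
subgroup `P` generated by `s₂, s₃, s₄, s₅` whose length is maximal among the lengths of
elements of `P`.  Then `w₀ · (s₂ s₅ s₇)` is conjugate in `W` to `u`, where `w₀` is an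
element of maximal Coxeter length in `W`. -/
theorem stmt14 (w₀ : CoxeterMatrix.E₇.Group)
    (hw₀ : ∀ w : CoxeterMatrix.E₇.Group,
      CoxeterMatrix.E₇.toCoxeterSystem.length w ≤ CoxeterMatrix.E₇.toCoxeterSystem.length w₀)
    (u : CoxeterMatrix.E₇.Group)
    (hu : u ∈ Subgroup.closure {CoxeterMatrix.E₇.simple 1, CoxeterMatrix.E₇.simple 2,
      CoxeterMatrix.E₇.simple 3, CoxeterMatrix.E₇.simple 4})
    (humax : ∀ v ∈ Subgroup.closure {CoxeterMatrix.E₇.simple 1, CoxeterMatrix.E₇.simple 2,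
        CoxeterMatrix.E₇.simple 3, CoxeterMatrix.E₇.simple 4},
      CoxeterMatrix.E₇.toCoxeterSystem.length v ≤ CoxeterMatrix.E₇.toCoxeterSystem.length u) :
    IsConj (w₀ * (CoxeterMatrix.E₇.simple 1 * CoxeterMatrix.E₇.simple 4 *
      CoxeterMatrix.E₇.simple 6)) u := by
  have hsimple : ∀ i : Fin 7, CoxeterMatrix.E₇.simple i = Stmt14.cs.simple i := by
    intro i
    rw [CoxeterMatrix.toCoxeterSystem_simple]
  simp only [hsimple] at hu humax ⊢
  have h1 : w₀ = Stmt14.z := Stmt14.w₀_eq w₀ hw₀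
  have h2 : u = Stmt14.u₀ := Stmt14.u_eq u hu humax
  rw [h1, h2]
  exact Stmt14.conj_result
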